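/- For 0 < ε < 1/2, the Gaussian integral ∫ exp(ε‖q‖²) dγ(q) over L², where γ is the Gaussian measure induced by the random Fourier series q = γ₀ + Σ_{n≥1} γ_n cos(nx)/n + Σ_{n≤-1} γ_n sin(nx)/n with (γ_n) i.i.d. standard normals, equals (1-2ε)^{-1/2} · √(επ)/sin(√(ε)π). Consequently, by Chebyshev's inequality, γ{q : ‖q‖²_{L²} > N} ≤ K_ε e^{-εN} where K_ε is that constant. -/

import Mathlib

open MeasureTheory ProbabilityTheory Real Filter
open scoped ENNReal NNReal Topology


lemma gauss_lint {a : ℝ} (ha : a < 1/2) :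
    ∫⁻ x, ENNReal.ofReal (Real.exp (a * x ^ 2)) ∂(gaussianReal 0 1) =
      ENNReal.ofReal ((1 - 2 * a) ^ (-(1:ℝ)/2)) := by
  have hb : (0:ℝ) < 1/2 - a := by linarith
  have h1 : (0:ℝ) < 1 - 2*a := by linarith
  rw [gaussianReal_of_var_ne_zero 0 one_ne_zero,
    lintegral_withDensity_eq_lintegral_mul _ (measurable_gaussianPDF 0 1)
      (by measurability)]
  have heq : ∀ x : ℝ, (gaussianPDF 0 1 * fun x => ENNReal.ofReal (Real.exp (a * x ^ 2))) x
      = ENNReal.ofReal ((Real.sqrt (2 * π))⁻¹ * Real.exp (-(1/2 - a) * x ^ 2)) := by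
    intro x
    simp only [Pi.mul_apply, gaussianPDF, gaussianPDFReal, NNReal.coe_one, mul_one, sub_zero]
    rw [← ENNReal.ofReal_mul (by positivity)]
    rw [mul_assoc, ← Real.exp_add]
    congr 2
    ring
  simp_rw [heq]
  rw [← ofReal_integral_eq_lintegral_ofReal
      ((integrable_exp_neg_mul_sq hb).const_mul _)
      (Filter.Eventually.of_forall fun x => by positivity)]
  congr 1
  rw [integral_const_mul, integral_gaussian]
  have h2 : π / (1/2 - a) = 2*π * (1 - 2*a)⁻¹ := by
    field_simp
  rw [h2, Real.sqrt_mul (by positivity : (0:ℝ) ≤ 2*π) (1 - 2*a)⁻¹,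
    inv_mul_cancel_left₀ (by positivity)]
  rw [Real.sqrt_eq_rpow, ← Real.rpow_neg_one (1 - 2*a), ← Real.rpow_mul h1.le]
  norm_num

lemma prod_Icc_int (u : ℤ → ℝ≥0∞) (m : ℕ) :
    ∏ k ∈ Finset.Icc (-(m:ℤ)) (m:ℤ), u k
      = u 0 * ∏ n ∈ Finset.range m, (u ((n:ℤ)+1) * u (-(n:ℤ)-1)) := by
  induction m with
  | zero => simp
  | succ m ih =>
    have h1 : Finset.Icc (-((m+1:ℕ):ℤ)) ((m+1:ℕ):ℤ)
        = insert ((m:ℤ)+1) (insert (-(m:ℤ)-1) (Finset.Icc (-(m:ℤ)) (m:ℤ))) := by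
      ext k
      simp only [Finset.mem_Icc, Finset.mem_insert]
      push_cast
      omega
    have h2 : ((m:ℤ)+1) ∉ insert (-(m:ℤ)-1) (Finset.Icc (-(m:ℤ)) (m:ℤ)) := by
      simp only [Finset.mem_Icc, Finset.mem_insert]
      omega
    have h3 : (-(m:ℤ)-1) ∉ Finset.Icc (-(m:ℤ)) (m:ℤ) := by
      simp only [Finset.mem_Icc]
      omega
    rw [h1, Finset.prod_insert h2, Finset.prod_insert h3, ih, Finset.prod_range_succ]
    ring

lemma lint_prod {Ω : Type*} [MeasureSpace Ω] [IsProbabilityMeasure (ℙ : Measure Ω)]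
    (g : ℤ → Ω → ℝ≥0∞) (hg : ∀ k, Measurable (g k))
    (hind : iIndepFun g ℙ) (s : Finset ℤ) :
    ∫⁻ ω, ∏ k ∈ s, g k ω ∂ℙ = ∏ k ∈ s, ∫⁻ ω, g k ω ∂ℙ := by
  classical
  induction s using Finset.induction_on with
  | empty => simp
  | @insert i s hi ih =>
    rw [Finset.prod_insert hi, ← ih]
    have hIndep : IndepFun (g i) (∏ j ∈ s, g j) ℙ :=
      (hind.indepFun_finsetProd_of_notMem hg hi).symm
    have hfn : (∏ j ∈ s, g j) = fun a => ∏ j ∈ s, g j a :=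
      funext fun a => Finset.prod_apply a s g
    have hGmeas : Measurable (fun a => ∏ j ∈ s, g j a) :=
      Finset.measurable_prod s fun j _ => hg j
    rw [hfn] at hIndep
    have h := lintegral_mul_eq_lintegral_mul_lintegral_of_indepFun (hg i)
      hGmeas hIndep
    simp only [Pi.mul_apply] at h
    simp only [Finset.prod_insert hi]
    exact h

lemma tendsto_P {ε : ℝ} (hε1 : 0 < ε) (hε2 : ε < 1/2) :
    Tendsto (fun m => (1 - 2*ε) ^ (-(1:ℝ)/2) *
        ∏ n ∈ Finset.range m, (1 - ε/((n:ℝ)+1)^2)⁻¹) atTop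
      (𝓝 ((1 - 2*ε) ^ (-(1:ℝ)/2) * (Real.sqrt ε * π) / Real.sin (Real.sqrt ε * π))) := by
  have hx1 : Real.sqrt ε < 1 := by
    rw [show (1:ℝ) = Real.sqrt 1 by simp]
    exact Real.sqrt_lt_sqrt hε1.le (by linarith)
  have hx0 : 0 < Real.sqrt ε := Real.sqrt_pos.mpr hε1
  have hA : 0 < π * Real.sqrt ε := by positivity
  have hsin : 0 < Real.sin (π * Real.sqrt ε) := by
    apply Real.sin_pos_of_pos_of_lt_pi (by positivity)
    nlinarith [Real.pi_pos]
  have h0 := Real.tendsto_euler_sin_prod (Real.sqrt ε)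
  rw [Real.sq_sqrt hε1.le] at h0
  -- h0 : Tendsto (fun n => π * √ε * ∏ j in range n, (1 - ε / (j+1)^2)) atTop (𝓝 (sin (π * √ε)))
  have hQ : Tendsto (fun m => ∏ n ∈ Finset.range m, (1 - ε/((n:ℝ)+1)^2)) atTop
      (𝓝 ((π * Real.sqrt ε)⁻¹ * Real.sin (π * Real.sqrt ε))) := by
    have h := h0.const_mul (π * Real.sqrt ε)⁻¹
    refine h.congr fun k => ?_
    rw [← mul_assoc, inv_mul_cancel₀ hA.ne', one_mul]
  have hQinv : Tendsto (fun m => (∏ n ∈ Finset.range m, (1 - ε/((n:ℝ)+1)^2))⁻¹) atTop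
      (𝓝 (((π * Real.sqrt ε)⁻¹ * Real.sin (π * Real.sqrt ε))⁻¹)) :=
    hQ.inv₀ (by positivity)
  have hfin := hQinv.const_mul ((1 - 2*ε) ^ (-(1:ℝ)/2))
  have hfu : (fun m => (1 - 2*ε) ^ (-(1:ℝ)/2) * ∏ n ∈ Finset.range m, (1 - ε/((n:ℝ)+1)^2)⁻¹)
      = fun m => (1 - 2*ε) ^ (-(1:ℝ)/2) * (∏ n ∈ Finset.range m, (1 - ε/((n:ℝ)+1)^2))⁻¹ := by
    funext m; rw [Finset.prod_inv_distrib]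
  rw [hfu, mul_comm (Real.sqrt ε) π]
  have hval : (1 - 2*ε) ^ (-(1:ℝ)/2) * (π * Real.sqrt ε) / Real.sin (π * Real.sqrt ε)
      = (1 - 2*ε) ^ (-(1:ℝ)/2) * ((π * Real.sqrt ε)⁻¹ * Real.sin (π * Real.sqrt ε))⁻¹ := by
    field_simp
  rw [hval]
  exact hfin


noncomputable def cc (k : ℤ) : ℝ := if k = 0 then 1 else ((2:ℝ) * ((k.natAbs:ℝ))^2)⁻¹

lemma cc_zero : cc 0 = 1 := if_pos rfl

lemma cc_bounds (k : ℤ) : 0 < cc k ∧ cc k ≤ 1 := by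
  unfold cc
  split_ifs with h
  · norm_num
  · have h1 : 1 ≤ k.natAbs := Int.natAbs_pos.mpr h
    have h2 : (1:ℝ) ≤ (k.natAbs:ℝ) := by exact_mod_cast h1
    have h3 : (1:ℝ) ≤ 2*((k.natAbs:ℝ))^2 := by nlinarith
    exact ⟨by positivity, inv_le_one_of_one_le₀ h3⟩

lemma cc_succ (n : ℕ) : cc ((n:ℤ)+1) = (2*((n:ℝ)+1)^2)⁻¹ := by
  unfold cc
  rw [if_neg (by omega)]
  have h : ((n:ℤ)+1).natAbs = n+1 := by omega
  rw [h]
  push_cast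
  ring_nf

lemma cc_neg (n : ℕ) : cc (-(n:ℤ)-1) = (2*((n:ℝ)+1)^2)⁻¹ := by
  unfold cc
  rw [if_neg (by omega)]
  have h : (-(n:ℤ)-1).natAbs = n+1 := by omega
  rw [h]
  push_cast
  ring_nf

noncomputable def Tfun {Ω : Type*} (γ : ℤ → Ω → ℝ) (n : ℕ) (ω : Ω) : ℝ :=
  ((γ ((n:ℤ)+1) ω)^2 + (γ (-(n:ℤ)-1) ω)^2) / ((n:ℝ)+1)^2

lemma Tfun_apply {Ω : Type*} (γ : ℤ → Ω → ℝ) (n : ℕ) (ω : Ω) :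
    Tfun γ n ω = ((γ ((n:ℤ)+1) ω)^2 + (γ (-(n:ℤ)-1) ω)^2) / ((n:ℝ)+1)^2 := rfl

noncomputable def Sfun {Ω : Type*} (γ : ℤ → Ω → ℝ) (m : ℕ) (ω : Ω) : ℝ :=
  (γ 0 ω)^2 + (1/2) * ∑ n ∈ Finset.range m, Tfun γ n ω

lemma Sfun_apply {Ω : Type*} (γ : ℤ → Ω → ℝ) (m : ℕ) (ω : Ω) :
    Sfun γ m ω = (γ 0 ω)^2 + (1/2) * ∑ n ∈ Finset.range m, Tfun γ n ω := rfl

lemma summable_w : Summable fun n : ℕ => ((((n:ℝ)+1)^2)⁻¹ : ℝ) := by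
  have h := Real.summable_one_div_nat_pow.mpr (le_refl 2)
  have h2 := (summable_nat_add_iff 1).mpr h
  refine h2.congr fun n => ?_
  push_cast
  rw [one_div]

/-- For `0 < ε < 1/2`, the Gaussian integral `∫ exp (ε ‖q‖²) dγ(q)` over
`L²`, where `γ` is induced by the random Fourier series
`q = γ₀ + ∑_{n≥1} γₙ cos(nx)/n + ∑_{n≤-1} γₙ sin(nx)/n` with `(γₙ)` i.i.d. standard normals
(so that by Parseval `‖q‖² = γ₀² + (1/2) ∑_{n≥1} (γₙ² + γ₋ₙ²)/n²`), equals
`(1-2ε)^{-1/2} · √ε π / sin(√ε π)`.  Consequently `γ{‖q‖² > N} ≤ K_ε e^{-εN}`. -/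
theorem stmt0 {Ω : Type*} [MeasureSpace Ω] [IsProbabilityMeasure (ℙ : Measure Ω)]
    (γ : ℤ → Ω → ℝ) (hmeas : ∀ n, Measurable (γ n))
    (hindep : iIndepFun γ ℙ)
    (hgauss : ∀ n, Measure.map (γ n) ℙ = gaussianReal 0 1)
    (ε : ℝ) (hε1 : 0 < ε) (hε2 : ε < 1 / 2)
    (normSq : Ω → ℝ)
    (hnormSq : ∀ ω, normSq ω = (γ 0 ω) ^ 2 +
      (1 / 2) * ∑' n : ℕ, ((γ ((n : ℤ) + 1) ω) ^ 2 + (γ (-(n : ℤ) - 1) ω) ^ 2) / ((n : ℝ) + 1) ^ 2)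
    (K : ℝ)
    (hK : K = (1 - 2 * ε) ^ (-(1 : ℝ) / 2) * (Real.sqrt ε * π) / Real.sin (Real.sqrt ε * π)) :
    (∫ ω, Real.exp (ε * normSq ω)) = K ∧
    ∀ N : ℝ, (ℙ {ω | normSq ω > N}).toReal ≤ K * Real.exp (-ε * N) := by
  have hK0 : 0 < K := by
    rw [hK]
    have hx1 : Real.sqrt ε < 1 := by
      rw [show (1:ℝ) = Real.sqrt 1 by simp]
      exact Real.sqrt_lt_sqrt hε1.le (by linarith)
    have hx0 : 0 < Real.sqrt ε := Real.sqrt_pos.mpr hε1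
    have hsin : 0 < Real.sin (Real.sqrt ε * π) := by
      apply Real.sin_pos_of_pos_of_lt_pi (by positivity)
      nlinarith [Real.pi_pos]
    have h12 : (0:ℝ) < 1 - 2*ε := by linarith
    have hr := Real.rpow_pos_of_pos h12 (-(1:ℝ)/2)
    positivity
  have hgm : ∀ b : ℝ, Measurable (fun x : ℝ => ENNReal.ofReal (Real.exp (b * x^2))) := by
    intro b
    exact ENNReal.measurable_ofReal.comp
      (Real.measurable_exp.comp ((measurable_id.pow_const 2).const_mul b))
  set g : ℤ → Ω → ℝ≥0∞ := fun k ω => ENNReal.ofReal (Real.exp (ε * cc k * (γ k ω)^2)) with hgdef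
  have hgmeas : ∀ k, Measurable (g k) := fun k => (hgm _).comp (hmeas k)
  have hgind : iIndepFun g ℙ :=
    hindep.comp (fun k => fun x : ℝ => ENNReal.ofReal (Real.exp (ε * cc k * x^2)))
      (fun k => hgm _)
  have hI : ∀ k : ℤ, ∫⁻ ω, g k ω ∂ℙ = ENNReal.ofReal ((1 - 2*(ε * cc k)) ^ (-(1:ℝ)/2)) := by
    intro k
    have h1 : ∫⁻ ω, g k ω ∂ℙ
        = ∫⁻ x, ENNReal.ofReal (Real.exp (ε * cc k * x^2)) ∂(Measure.map (γ k) ℙ) :=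
      (lintegral_map (hgm _) (hmeas k)).symm
    rw [h1, hgauss k]
    exact gauss_lint (by nlinarith [(cc_bounds k).1, (cc_bounds k).2])
  -- pointwise product identity
  have hptw : ∀ (m : ℕ) (ω : Ω), ∏ k ∈ Finset.Icc (-(m:ℤ)) (m:ℤ), g k ω
      = ENNReal.ofReal (Real.exp (ε * Sfun γ m ω)) := by
    intro m ω
    rw [prod_Icc_int (fun k => g k ω) m]
    have hfac : ∀ n ∈ Finset.range m, g ((n:ℤ)+1) ω * g (-(n:ℤ)-1) ω
        = ENNReal.ofReal (Real.exp (ε * cc ((n:ℤ)+1) * (γ ((n:ℤ)+1) ω)^2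
            + ε * cc (-(n:ℤ)-1) * (γ (-(n:ℤ)-1) ω)^2)) := by
      intro n _
      rw [hgdef]
      rw [← ENNReal.ofReal_mul (Real.exp_nonneg _), ← Real.exp_add]
    rw [Finset.prod_congr rfl hfac,
      ← ENNReal.ofReal_prod_of_nonneg (fun n _ => Real.exp_nonneg _), ← Real.exp_sum]
    rw [← ENNReal.ofReal_mul (Real.exp_nonneg _), ← Real.exp_add]
    congr 1
    have hterm : ∀ n ∈ Finset.range m,
        ε * cc ((n:ℤ)+1) * (γ ((n:ℤ)+1) ω)^2 + ε * cc (-(n:ℤ)-1) * (γ (-(n:ℤ)-1) ω)^2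
          = ε * (1/2) * Tfun γ n ω := by
      intro n _
      rw [cc_succ, cc_neg]
      have hne : ((n:ℝ)+1)^2 ≠ 0 := by positivity
      rw [Tfun_apply]
      have h2 : (0:ℝ) < ((n:ℝ)+1)^2 := by positivity
      field_simp
    rw [Finset.sum_congr rfl hterm, ← Finset.mul_sum, cc_zero, Sfun_apply]
    ring
  -- value of the partial integrals
  have hval : ∀ m : ℕ, ∫⁻ ω, ENNReal.ofReal (Real.exp (ε * Sfun γ m ω)) ∂ℙ
      = ENNReal.ofReal ((1 - 2*ε) ^ (-(1:ℝ)/2) *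
          ∏ n ∈ Finset.range m, (1 - ε/((n:ℝ)+1)^2)⁻¹) := by
    intro m
    have h1 : ∫⁻ ω, ENNReal.ofReal (Real.exp (ε * Sfun γ m ω)) ∂ℙ
        = ∫⁻ ω, ∏ k ∈ Finset.Icc (-(m:ℤ)) (m:ℤ), g k ω ∂ℙ := by
      refine lintegral_congr fun ω => ?_
      rw [hptw m ω]
    rw [h1, lint_prod g hgmeas hgind, prod_Icc_int (fun k => ∫⁻ ω, g k ω ∂ℙ) m, hI 0, cc_zero]
    have hpair : ∀ n ∈ Finset.range m,
        (∫⁻ ω, g ((n:ℤ)+1) ω ∂ℙ) * (∫⁻ ω, g (-(n:ℤ)-1) ω ∂ℙ)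
          = ENNReal.ofReal ((1 - ε/((n:ℝ)+1)^2)⁻¹) := by
      intro n _
      rw [hI, hI, cc_succ, cc_neg]
      have hone : (1:ℝ) ≤ ((n:ℝ)+1)^2 := by nlinarith [Nat.cast_nonneg (α := ℝ) n]
      have hpos : (0:ℝ) < 1 - ε/((n:ℝ)+1)^2 := by
        have h2 : ε/((n:ℝ)+1)^2 ≤ ε := div_le_self hε1.le hone
        linarith
      have harg : (1:ℝ) - 2*(ε * (2*((n:ℝ)+1)^2)⁻¹) = 1 - ε/((n:ℝ)+1)^2 := by
        have h3 : ((n:ℝ)+1)^2 ≠ 0 := by positivity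
        field_simp
      rw [harg, ← ENNReal.ofReal_mul (by positivity)]
      congr 1
      rw [← Real.rpow_add hpos, show -(1:ℝ)/2 + -(1:ℝ)/2 = -1 by norm_num,
        Real.rpow_neg_one]
    have hpos' : ∀ n : ℕ, (0:ℝ) ≤ (1 - ε/((n:ℝ)+1)^2)⁻¹ := by
      intro n
      have hone : (1:ℝ) ≤ ((n:ℝ)+1)^2 := by nlinarith [Nat.cast_nonneg (α := ℝ) n]
      have h2 : ε/((n:ℝ)+1)^2 ≤ ε := div_le_self hε1.le hone
      have h5 : (0:ℝ) < 1 - ε/((n:ℝ)+1)^2 := by linarith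
      positivity
    rw [Finset.prod_congr rfl hpair,
      ← ENNReal.ofReal_prod_of_nonneg (fun n _ => hpos' n),
      ← ENNReal.ofReal_mul (Real.rpow_nonneg (by linarith) _)]
    norm_num
  -- monotonicity
  have hTnn : ∀ (n : ℕ) (ω : Ω), 0 ≤ Tfun γ n ω := by
    intro n ω
    rw [Tfun_apply]
    positivity
  have hmono : ∀ ω : Ω, Monotone fun m => ENNReal.ofReal (Real.exp (ε * Sfun γ m ω)) := by
    intro ω
    apply monotone_nat_of_le_succ
    intro m
    apply ENNReal.ofReal_le_ofReal
    apply Real.exp_le_exp.mpr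
    apply mul_le_mul_of_nonneg_left _ hε1.le
    rw [Sfun_apply, Sfun_apply, Finset.sum_range_succ]
    have h4 := hTnn m ω
    linarith
  -- measurability
  have hTmeas : ∀ n : ℕ, Measurable (fun ω => ENNReal.ofReal (Tfun γ n ω)) := by
    intro n
    apply ENNReal.measurable_ofReal.comp
    unfold Tfun
    exact (((hmeas _).pow_const 2).add ((hmeas _).pow_const 2)).div_const _
  have hSmeas : ∀ m : ℕ, Measurable (fun ω => ENNReal.ofReal (Real.exp (ε * Sfun γ m ω))) := by
    intro m
    apply ENNReal.measurable_ofReal.comp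
    apply Real.measurable_exp.comp
    apply Measurable.const_mul
    unfold Sfun Tfun
    exact ((hmeas 0).pow_const 2).add ((Finset.measurable_sum _ fun n _ =>
      (((hmeas _).pow_const 2).add ((hmeas _).pow_const 2)).div_const _).const_mul _)
  -- second moment bound
  have hmom : ∫⁻ x, ENNReal.ofReal (x^2) ∂(gaussianReal 0 1) ≠ ⊤ := by
    have hb : ∀ x : ℝ, ENNReal.ofReal (x^2)
        ≤ ENNReal.ofReal 4 * ENNReal.ofReal (Real.exp ((1/4:ℝ)*x^2)) := by
      intro x
      rw [← ENNReal.ofReal_mul (by norm_num)]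
      apply ENNReal.ofReal_le_ofReal
      have h := Real.add_one_le_exp ((1/4:ℝ)*x^2)
      nlinarith [sq_nonneg x]
    have h2 : ∫⁻ x, ENNReal.ofReal (x^2) ∂(gaussianReal 0 1)
        ≤ ENNReal.ofReal 4 * ENNReal.ofReal ((1 - 2*(1/4:ℝ)) ^ (-(1:ℝ)/2)) := by
      calc ∫⁻ x, ENNReal.ofReal (x^2) ∂(gaussianReal 0 1)
          ≤ ∫⁻ x, ENNReal.ofReal 4 * ENNReal.ofReal (Real.exp ((1/4:ℝ)*x^2))
              ∂(gaussianReal 0 1) := lintegral_mono hb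
        _ = ENNReal.ofReal 4 * ∫⁻ x, ENNReal.ofReal (Real.exp ((1/4:ℝ)*x^2))
              ∂(gaussianReal 0 1) := lintegral_const_mul _ (hgm _)
        _ = _ := by rw [gauss_lint (by norm_num : (1/4:ℝ) < 1/2)]
    exact ne_top_of_le_ne_top (ENNReal.mul_ne_top ENNReal.ofReal_ne_top ENNReal.ofReal_ne_top) h2
  have hγsq : ∀ k : ℤ, ∫⁻ ω, ENNReal.ofReal ((γ k ω)^2) ∂ℙ
      = ∫⁻ x, ENNReal.ofReal (x^2) ∂(gaussianReal 0 1) := by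
    intro k
    rw [← hgauss k, lintegral_map ((measurable_id'.pow_const 2).ennreal_ofReal) (hmeas k)]
  have hsumfin : ∫⁻ ω, ∑' n, ENNReal.ofReal (Tfun γ n ω) ∂ℙ ≠ ⊤ := by
    rw [lintegral_tsum fun n => (hTmeas n).aemeasurable]
    have hTsplit : ∀ (n : ℕ) (ω : Ω), ENNReal.ofReal (Tfun γ n ω)
        = (ENNReal.ofReal ((γ ((n:ℤ)+1) ω)^2) + ENNReal.ofReal ((γ (-(n:ℤ)-1) ω)^2))
            * ENNReal.ofReal ((((n:ℝ)+1)^2)⁻¹) := by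
      intro n ω
      rw [← ENNReal.ofReal_add (by positivity) (by positivity),
        ← ENNReal.ofReal_mul (by positivity), Tfun_apply, div_eq_mul_inv]
    have hint : ∀ n : ℕ, ∫⁻ ω, ENNReal.ofReal (Tfun γ n ω) ∂ℙ
        = ((∫⁻ x, ENNReal.ofReal (x^2) ∂(gaussianReal 0 1)) * 2)
            * ENNReal.ofReal ((((n:ℝ)+1)^2)⁻¹) := by
      intro n
      simp_rw [hTsplit]
      rw [lintegral_mul_const (f := fun ω =>
            ENNReal.ofReal (γ ((n:ℤ)+1) ω ^ 2) + ENNReal.ofReal (γ (-(n:ℤ)-1) ω ^ 2)) _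
          ((((hmeas _).pow_const 2).ennreal_ofReal).add
          (((hmeas _).pow_const 2).ennreal_ofReal)),
        lintegral_add_left (((hmeas _).pow_const 2).ennreal_ofReal),
        hγsq, hγsq]
      ring
    rw [tsum_congr hint, ENNReal.tsum_mul_left]
    apply ENNReal.mul_ne_top
    · exact ENNReal.mul_ne_top hmom (by norm_num)
    · rw [← ENNReal.ofReal_tsum_of_nonneg (fun n => by positivity) summable_w]
      exact ENNReal.ofReal_ne_top
  have hae : ∀ᵐ ω ∂ℙ, ∑' n, ENNReal.ofReal (Tfun γ n ω) < ⊤ :=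
    ae_lt_top (Measurable.ennreal_tsum hTmeas) hsumfin
  have haet : ∀ᵐ ω ∂ℙ, Tendsto (fun m => ENNReal.ofReal (Real.exp (ε * Sfun γ m ω))) atTop
      (𝓝 (ENNReal.ofReal (Real.exp (ε * normSq ω)))) := by
    filter_upwards [hae] with ω hω
    have hsumm : Summable fun n => Tfun γ n ω := by
      have h1 := ENNReal.summable_toReal hω.ne
      exact h1.congr fun n => ENNReal.toReal_ofReal (hTnn n ω)
    have h2 : Tendsto (fun m => ∑ n ∈ Finset.range m, Tfun γ n ω) atTop
        (𝓝 (∑' n, Tfun γ n ω)) := hsumm.hasSum.tendsto_sum_nat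
    have h3 : Tendsto (fun m => Sfun γ m ω) atTop (𝓝 (normSq ω)) := by
      have h4 : normSq ω = (γ 0 ω)^2 + (1/2) * ∑' n, Tfun γ n ω := by
        rw [hnormSq ω]
        exact congrArg (fun z => (γ 0 ω)^2 + 1/2 * z)
          (tsum_congr fun n => (Tfun_apply γ n ω).symm)
      rw [h4]
      simp_rw [Sfun_apply]
      exact (h2.const_mul (1/2:ℝ)).const_add ((γ 0 ω)^2)
    exact (ENNReal.continuous_ofReal.tendsto _).comp
      ((Real.continuous_exp.tendsto _).comp (h3.const_mul ε))
  have hmct := lintegral_tendsto_of_tendsto_of_monotone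
    (fun m => (hSmeas m).aemeasurable) (Eventually.of_forall hmono) haet
  have hlim2 : Tendsto (fun m => ∫⁻ ω, ENNReal.ofReal (Real.exp (ε * Sfun γ m ω)) ∂ℙ) atTop
      (𝓝 (ENNReal.ofReal K)) := by
    have h5 := (ENNReal.continuous_ofReal.tendsto _).comp (tendsto_P hε1 hε2)
    rw [hK]
    exact Tendsto.congr (fun m => (hval m).symm) h5
  have hkey : ∫⁻ ω, ENNReal.ofReal (Real.exp (ε * normSq ω)) ∂ℙ = ENNReal.ofReal K :=
    tendsto_nhds_unique hmct hlim2
  have hNmeas : Measurable normSq := by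
    have hfun : normSq = fun ω => (γ 0 ω)^2
        + (1/2) * (∑' n, ENNReal.ofReal (Tfun γ n ω)).toReal := by
      funext ω
      rw [hnormSq ω]
      congr 1
      congr 1
      rw [show (∑' (n : ℕ), ((γ ((n:ℤ)+1) ω)^2 + (γ (-(n:ℤ)-1) ω)^2) / ((n:ℝ)+1)^2)
          = ∑' n, Tfun γ n ω from tsum_congr fun n => (Tfun_apply γ n ω).symm]
      by_cases hs : Summable fun n => Tfun γ n ω
      · rw [← ENNReal.ofReal_tsum_of_nonneg (fun n => hTnn n ω) hs,
          ENNReal.toReal_ofReal (tsum_nonneg fun n => hTnn n ω)]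
      · rw [tsum_eq_zero_of_not_summable hs]
        have htop : ∑' n, ENNReal.ofReal (Tfun γ n ω) = ⊤ := by
          by_contra h
          exact hs ((ENNReal.summable_toReal h).congr
            fun n => ENNReal.toReal_ofReal (hTnn n ω))
        rw [htop]
        simp
    rw [hfun]
    exact ((hmeas 0).pow_const 2).add
      (((Measurable.ennreal_tsum hTmeas).ennreal_toReal).const_mul _)
  constructor
  · rw [integral_eq_lintegral_of_nonneg_ae (Eventually.of_forall fun ω => (Real.exp_pos _).le)
      (Real.measurable_exp.comp (hNmeas.const_mul ε)).aestronglyMeasurable]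
    rw [hkey, ENNReal.toReal_ofReal hK0.le]
  · intro N
    have hsub : {ω | normSq ω > N} ⊆ {ω | ENNReal.ofReal (Real.exp (ε * N))
        ≤ ENNReal.ofReal (Real.exp (ε * normSq ω))} := by
      intro ω h
      simp only [Set.mem_setOf_eq] at h ⊢
      apply ENNReal.ofReal_le_ofReal
      apply Real.exp_le_exp.mpr
      nlinarith
    have hmeasf : AEMeasurable (fun ω => ENNReal.ofReal (Real.exp (ε * normSq ω))) ℙ :=
      (ENNReal.measurable_ofReal.comp
        (Real.measurable_exp.comp (hNmeas.const_mul ε))).aemeasurable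
    have h6 : ENNReal.ofReal (Real.exp (ε * N)) * ℙ {ω | normSq ω > N}
        ≤ ENNReal.ofReal K := by
      calc ENNReal.ofReal (Real.exp (ε * N)) * ℙ {ω | normSq ω > N}
          ≤ ENNReal.ofReal (Real.exp (ε * N)) * ℙ {ω | ENNReal.ofReal (Real.exp (ε * N))
              ≤ ENNReal.ofReal (Real.exp (ε * normSq ω))} :=
            mul_le_mul_right (measure_mono hsub) _
        _ ≤ ∫⁻ ω, ENNReal.ofReal (Real.exp (ε * normSq ω)) ∂ℙ :=
            mul_meas_ge_le_lintegral₀ hmeasf _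
        _ = ENNReal.ofReal K := hkey
    have h7 : ℙ {ω | normSq ω > N} ≤ ENNReal.ofReal (K * Real.exp (-ε * N)) := by
      have hexp0 : ENNReal.ofReal (Real.exp (ε * N)) ≠ 0 :=
        (ENNReal.ofReal_pos.mpr (Real.exp_pos _)).ne'
      rw [show K * Real.exp (-ε * N) = K / Real.exp (ε * N) by
        rw [neg_mul, Real.exp_neg, div_eq_mul_inv]]
      rw [ENNReal.ofReal_div_of_pos (Real.exp_pos _)]
      rw [ENNReal.le_div_iff_mul_le (Or.inl hexp0) (Or.inl ENNReal.ofReal_ne_top)]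
      rw [mul_comm]
      exact h6
    calc (ℙ {ω | normSq ω > N}).toReal
        ≤ (ENNReal.ofReal (K * Real.exp (-ε * N))).toReal :=
          ENNReal.toReal_mono ENNReal.ofReal_ne_top h7
      _ = K * Real.exp (-ε * N) := ENNReal.toReal_ofReal (by positivity)
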